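/- arXiv:0706.2228 — 3 statements merged into one kernel-verified Lean document; each statement's English description precedes it below -/
import Mathlib

section
/- Let K be a field and τ the shift operator on functions Z/nZ → K. The operator 1 + τ + τ^{-1} has nontrivial kernel if and only if there exists ζ in the algebraic closure of K with ζ^n = 1 and 1 + ζ + ζ^{-1} = 0. -/
theorem shift_laplacian_kernel_iff (K : Type*) [Field K] (n : ℕ) (hn : 1 ≤ n) :
    (∃ f : ZMod n → K, f ≠ 0 ∧ ∀ x : ZMod n, f x + f (x + 1) + f (x - 1) = 0) ↔
      ∃ ζ : AlgebraicClosure K, ζ ^ n = 1 ∧ 1 + ζ + ζ⁻¹ = 0 := by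
  haveI : NeZero n := ⟨by omega⟩
  by_cases h3 : (3 : K) = 0
  · -- characteristic 3: both sides hold
    constructor
    · intro _
      refine ⟨1, one_pow n, ?_⟩
      have : (3 : AlgebraicClosure K) = 0 := by
        have h := congrArg (algebraMap K (AlgebraicClosure K)) h3
        rw [map_ofNat, map_zero] at h
        exact h
      rw [inv_one]
      linear_combination this
    · intro _
      refine ⟨fun _ => 1, ?_, ?_⟩
      · intro h
        have := congrFun h 0
        simp at this
      · intro x
        linear_combination h3
  · -- characteristic ≠ 3
    have h3' : (3 : AlgebraicClosure K) ≠ 0 := by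
      intro h
      apply h3
      have h2 : algebraMap K (AlgebraicClosure K) 3 = algebraMap K (AlgebraicClosure K) 0 := by
        rw [map_ofNat, map_zero]; exact h
      exact (algebraMap K (AlgebraicClosure K)).injective h2
    constructor
    · rintro ⟨f, hf0, hf⟩
      -- derive 3 ∣ n
      have hsum : ∀ x : ZMod n, f x + f (x + 1) + f (x + 2) = 0 := by
        intro x
        have h := hf (x + 1)
        have e1 : x + 1 - 1 = x := by ring
        have e2 : x + 1 + 1 = x + 2 := by ring
        rw [e1, e2] at h
        linear_combination h
      have hper : ∀ x : ZMod n, f (x + 3) = f x := by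
        intro x
        have h1 := hsum x
        have h2 := hsum (x + 1)
        have e1 : x + 1 + 1 = x + 2 := by ring
        have e2 : x + 1 + 2 = x + 3 := by ring
        rw [e1, e2] at h2
        linear_combination h2 - h1
      have h3n : 3 ∣ n := by
        by_contra hnd
        have hcop : Nat.Coprime 3 n := (Nat.prime_three.coprime_iff_not_dvd).mpr hnd
        have hu : IsUnit (3 : ZMod n) := by
          have := (ZMod.isUnit_iff_coprime 3 n).mpr hcop
          simpa using this
        have hiter : ∀ (k : ℕ) (x : ZMod n), f (x + 3 * (k : ZMod n)) = f x := by
          intro k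
          induction k with
          | zero => intro x; simp
          | succ m ih =>
            intro x
            have e : x + 3 * ((m + 1 : ℕ) : ZMod n) = (x + 3 * (m : ZMod n)) + 3 := by
              push_cast; ring
            rw [e, hper, ih]
        have hconst : ∀ x : ZMod n, f x = f 0 := by
          intro x
          have hk : (3 : ZMod n) * (((3 : ZMod n)⁻¹ * x).val : ZMod n) = x := by
            rw [ZMod.natCast_val, ZMod.cast_id]
            rw [← mul_assoc, ZMod.mul_inv_of_unit _ hu, one_mul]
          have := hiter ((3 : ZMod n)⁻¹ * x).val 0
          rw [zero_add, hk] at this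
          exact this
        have hc : (3 : K) * f 0 = 0 := by
          have h := hf 0
          rw [hconst (0 + 1), hconst (0 - 1)] at h
          linear_combination h
        have hf00 : f 0 = 0 := by
          rcases mul_eq_zero.mp hc with h | h
          · exact absurd h h3
          · exact h
        apply hf0
        funext x
        rw [hconst x, hf00]
        rfl
      -- now produce the root of unity
      obtain ⟨m, hm⟩ := h3n
      obtain ⟨ζ, hζ⟩ := IsAlgClosed.exists_root
        (Polynomial.X ^ 2 + Polynomial.X + 1 : Polynomial (AlgebraicClosure K))
        (by
          have hd : (Polynomial.X ^ 2 + Polynomial.X + 1 :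
              Polynomial (AlgebraicClosure K)).degree = 2 := by
            compute_degree!
          rw [hd]; norm_num)
      have hq : ζ ^ 2 + ζ + 1 = 0 := by
        have := hζ
        simp [Polynomial.IsRoot] at this
        linear_combination this
      have hz0 : ζ ≠ 0 := by
        intro h
        rw [h] at hq
        simp at hq
      have hz3 : ζ ^ 3 = 1 := by
        linear_combination (ζ - 1) * hq
      refine ⟨ζ, ?_, ?_⟩
      · rw [hm, pow_mul, hz3, one_pow]
      · field_simp
        linear_combination hq
    · rintro ⟨ζ, hζn, hζ⟩
      -- derive 3 ∣ n, then construct f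
      have hz0 : ζ ≠ 0 := by
        intro h
        rw [h] at hζn
        rw [zero_pow (by omega : n ≠ 0)] at hζn
        exact zero_ne_one hζn
      have hq : ζ ^ 2 + ζ + 1 = 0 := by
        have h := hζ
        field_simp at h
        linear_combination h
      have hz3 : ζ ^ 3 = 1 := by
        linear_combination (ζ - 1) * hq
      have hz1 : ζ ≠ 1 := by
        intro h
        rw [h] at hq
        apply h3'
        linear_combination hq
      have hord3 : orderOf ζ = 3 := by
        have hdvd : orderOf ζ ∣ 3 := orderOf_dvd_of_pow_eq_one hz3
        rcases (Nat.prime_three.eq_one_or_self_of_dvd _ hdvd) with h | h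
        · exact absurd (orderOf_eq_one_iff.mp h) hz1
        · exact h
      have h3n : 3 ∣ n := by
        rw [← hord3]
        exact orderOf_dvd_of_pow_eq_one hζn
      -- construct f via reduction mod 3
      set g : ZMod 3 → K := fun y => if y = 0 then 1 else if y = 1 then -1 else 0 with hg
      refine ⟨fun x => g (ZMod.castHom h3n (ZMod 3) x), ?_, ?_⟩
      · intro h
        have := congrFun h 0
        simp [hg] at this
      · intro x
        have e1 : ZMod.castHom h3n (ZMod 3) (x + 1) = ZMod.castHom h3n (ZMod 3) x + 1 := by
          rw [map_add, map_one]
        have e2 : ZMod.castHom h3n (ZMod 3) (x - 1) = ZMod.castHom h3n (ZMod 3) x - 1 := by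
          rw [map_sub, map_one]
        show g (ZMod.castHom h3n (ZMod 3) x) + g (ZMod.castHom h3n (ZMod 3) (x + 1))
            + g (ZMod.castHom h3n (ZMod 3) (x - 1)) = 0
        rw [e1, e2]
        have key : ∀ y : ZMod 3, g y + g (y + 1) + g (y - 1) = 0 := by
          intro y
          have hy : ∀ y : ZMod 3, (y = 0 ∧ y + 1 = 1 ∧ y - 1 = 2) ∨ (y = 1 ∧ y + 1 = 2 ∧ y - 1 = 0) ∨
              (y = 2 ∧ y + 1 = 0 ∧ y - 1 = 1) := by decide
          have h10 : (1 : ZMod 3) ≠ 0 := by decide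
          have h20 : (2 : ZMod 3) ≠ 0 := by decide
          have h21 : (2 : ZMod 3) ≠ 1 := by decide
          rcases hy y with ⟨a, b, c⟩ | ⟨a, b, c⟩ | ⟨a, b, c⟩ <;> rw [b, c, a] <;> simp [hg, h10, h20, h21]
        exact key _
end

section
/- The linear path graph P_n with n vertices admits a nonzero F_2-valued harmonic function if and only if n ≡ 2 (mod 3). -/
theorem path_harmonic_iff (n : ℕ) (hn : 1 ≤ n) :
    (∃ h : ℤ → ZMod 2, h ≠ 0 ∧ (∀ v : ℤ, v < 1 ∨ (n : ℤ) < v → h v = 0) ∧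
      ∀ v : ℤ, 1 ≤ v → v ≤ (n : ℤ) → h v + h (v + 1) + h (v - 1) = 0) ↔ n % 3 = 2 := by
  constructor
  · rintro ⟨h, hne, hbd, hrel⟩
    by_contra hmod
    apply hne
    have h0 : h 0 = 0 := hbd 0 (Or.inl (by norm_num))
    have hrec : ∀ v : ℤ, 1 ≤ v → v ≤ (n:ℤ) → h (v+1) = h v + h (v-1) := by
      intro v h1 h2
      have hv := hrel v h1 h2
      have : h (v+1) = -(h v + h (v-1)) := by linear_combination hv
      simpa [CharTwo.neg_eq] using this
    set a := h 1 with ha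
    have key : ∀ k : ℕ, k ≤ n + 1 → h k = if k % 3 = 0 then 0 else a := by
      intro k
      induction k using Nat.strong_induction_on with
      | _ k ih =>
        match k with
        | 0 => intro _; simpa using h0
        | 1 => intro _; simp [ha]
        | (k+2) =>
          intro hk
          have e1 := ih (k+1) (by omega) (by omega)
          have e0 := ih k (by omega) (by omega)
          have hrw : ((k+2 : ℕ) : ℤ) = ((k+1:ℕ):ℤ) + 1 := by push_cast; ring
          have hrw2 : ((k+1:ℕ):ℤ) - 1 = (k:ℤ) := by push_cast; ring
          have hr := hrec ((k+1:ℕ):ℤ) (by push_cast; omega) (by push_cast; omega)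
          rw [hrw2] at hr
          rw [hrw, hr, e1, e0]
          have h3 : k % 3 = 0 ∨ k % 3 = 1 ∨ k % 3 = 2 := by omega
          rcases h3 with h3 | h3 | h3
          · have a1 : (k+1) % 3 = 1 := by omega
            have a2 : (k+2) % 3 = 2 := by omega
            simp [h3, a1, a2]
          · have a1 : (k+1) % 3 = 2 := by omega
            have a2 : (k+2) % 3 = 0 := by omega
            simp [h3, a1, a2, CharTwo.add_self_eq_zero]
          · have a1 : (k+1) % 3 = 0 := by omega
            have a2 : (k+2) % 3 = 1 := by omega
            simp [h3, a1, a2]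
    have ha0 : a = 0 := by
      have hb : h ((n:ℤ)+1) = 0 := hbd _ (Or.inr (by omega))
      have hk := key (n+1) le_rfl
      have hne3 : (n+1) % 3 ≠ 0 := by omega
      rw [if_neg hne3] at hk
      rw [← hk]
      push_cast
      exact hb
    funext v
    rcases lt_or_ge v 1 with hv | hv
    · exact hbd v (Or.inl hv)
    rcases le_or_gt v (n:ℤ) with hv2 | hv2
    · have hvt : v = ((v.toNat : ℕ) : ℤ) := by omega
      have hk := key v.toNat (by omega)
      rw [← hvt] at hk
      rw [hk, ha0]
      simp
    · exact hbd v (Or.inr hv2)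
  · intro hm
    have hn2 : 2 ≤ n := by omega
    refine ⟨fun v => if 1 ≤ v ∧ v ≤ (n:ℤ) ∧ ¬(3 ∣ v) then 1 else 0, ?_, ?_, ?_⟩
    · intro h0
      have h1 := congrFun h0 1
      rw [if_pos ⟨le_refl _, by exact_mod_cast Nat.one_le_cast.mpr hn, by decide⟩] at h1
      exact one_ne_zero h1
    · intro v hv
      simp only
      rw [if_neg]
      omega
    · intro v h1 h2
      simp only
      split_ifs <;> first | rfl | decide | omega
end

section
/- With F_n, G_n the normalized Chebyshev polynomials defined by F_0=0, F_1=1, F_n = xF_{n-1} − F_{n-2} and G_0=2, G_1=x, G_n = xG_{n-1} − G_{n-2}, one has F_{mn} = F_n · (F_m ∘ G_n) in Z[x] for all m, n ≥ 0. -/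
open Polynomial in
/-- Normalized Chebyshev polynomials of the second kind. -/
noncomputable def chebF : ℕ → Polynomial ℤ
  | 0 => 0
  | 1 => 1
  | (n + 2) => X * chebF (n + 1) - chebF n

open Polynomial in
/-- Normalized Chebyshev polynomials of the first kind. -/
noncomputable def chebG : ℕ → Polynomial ℤ
  | 0 => 2
  | 1 => X
  | (n + 2) => X * chebG (n + 1) - chebG n

open Polynomial

lemma chebF_add_two (n : ℕ) : chebF (n + 2) = X * chebF (n + 1) - chebF n := by
  rfl

lemma chebG_add_two (n : ℕ) : chebG (n + 2) = X * chebG (n + 1) - chebG n := by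
  rfl

/-- Addition formula. -/
lemma chebF_add (a b : ℕ) :
    chebF (a + b + 1) = chebF (a + 1) * chebF (b + 1) - chebF a * chebF b := by
  induction b using Nat.strong_induction_on generalizing a with
  | _ b ih =>
    match b with
    | 0 => simp [chebF]
    | 1 =>
      show chebF (a + 2) = _
      rw [chebF_add_two]
      simp [chebF]
      ring
    | (b + 2) =>
      have h1 := ih (b + 1) (by omega) a
      have h2 := ih b (by omega) a
      have : a + (b + 2) + 1 = (a + b + 1) + 2 := by ring
      rw [this, chebF_add_two, chebF_add_two b, chebF_add_two (b + 1)]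
      have : a + b + 1 + 1 = a + (b + 1) + 1 := by ring
      rw [this, h1, h2]
      ring

/-- d'Ocagne-style identity. -/
lemma chebF_docagne (a k : ℕ) :
    chebF (k + 1) * chebF (a + k) - chebF k * chebF (a + k + 1) = chebF a := by
  induction k with
  | zero => simp [chebF]
  | succ k ih =>
    have h1 : a + (k + 1) + 1 = (a + k) + 2 := by ring
    rw [h1, chebF_add_two (a + k), chebF_add_two k]
    have h2 : a + (k + 1) = (a + k) + 1 := by ring
    rw [h2]
    linear_combination ih

lemma chebG_eq (n : ℕ) : chebG (n + 1) = chebF (n + 2) - chebF n := by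
  induction n using Nat.strong_induction_on with
  | _ n ih =>
    match n with
    | 0 => simp [chebF, chebG]
    | 1 =>
      show chebG 2 = chebF 3 - chebF 1
      rw [chebG_add_two 0, chebF_add_two 1, chebF_add_two 0]
      simp [chebF, chebG]
      ring
    | (n + 2) =>
      have h1 := ih (n + 1) (by omega)
      have h2 := ih n (by omega)
      rw [chebG_add_two, chebF_add_two (n + 2), h1, h2]
      linear_combination chebF_add_two n

/-- Step-n recurrence. -/
lemma chebF_step (a n : ℕ) :
    chebF (a + 2 * n) = chebG n * chebF (a + n) - chebF a := by
  match n with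
  | 0 => simp [chebG]; ring
  | (k + 1) =>
    have h1 : a + 2 * (k + 1) = (a + k) + (k + 1) + 1 := by ring
    have h2 := chebF_add (a + k) (k + 1)
    have h3 := chebF_docagne a k
    rw [h1, h2, chebG_eq k]
    have e1 : a + k + 1 = a + (k + 1) := by ring
    rw [e1] at h3 ⊢
    linear_combination -h3

theorem chebF_mul_index (m n : ℕ) :
    chebF (m * n) = chebF n * (chebF m).comp (chebG n) := by
  induction m using Nat.strong_induction_on with
  | _ m ih =>
    match m with
    | 0 => simp [chebF]
    | 1 => simp [chebF]
    | (m + 2) =>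
      have h1 := ih (m + 1) (by omega)
      have h2 := ih m (by omega)
      have e : (m + 2) * n = m * n + 2 * n := by ring
      rw [e, chebF_step (m * n) n, chebF_add_two m]
      have e2 : m * n + n = (m + 1) * n := by ring
      rw [e2, h1, h2]
      simp [sub_comp, mul_comp]
      ring
end
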